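/- Let φ : M → ℝⁿ be a C² isometric immersion of a k-dimensional manifold with mean curvature vector H satisfying |H| ≤ h, and let w ∈ C²(ℝⁿ) satisfy P_k^-(∇²w) − h|∇w| ≥ ξ∘w pointwise for some function ξ. Then v = w∘φ satisfies Δ_M v ≥ ξ∘v pointwise on M, where Δ_M is the Laplace–Beltrami operator of the induced metric. -/

import Mathlib

/-- P_k^-(∇²w)(x): the sum of the k smallest eigenvalues of the Hessian of w at x,
via its min-max characterization as the infimum of the trace of the Hessian over
k-dimensional subspaces (orthonormal k-tuples). -/
noncomputable def PkHess (n k : ℕ) (w : EuclideanSpace ℝ (Fin n) → ℝ)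
    (x : EuclideanSpace ℝ (Fin n)) : ℝ :=
  sInf {t : ℝ | ∃ e : Fin k → EuclideanSpace ℝ (Fin n), Orthonormal ℝ e ∧
    t = ∑ i, iteratedFDeriv ℝ 2 w x ![e i, e i]}

/-- Chain rule for the second derivative of a composition. -/
lemma second_deriv_comp (k n : ℕ)
    (φ : EuclideanSpace ℝ (Fin k) → EuclideanSpace ℝ (Fin n))
    (w : EuclideanSpace ℝ (Fin n) → ℝ)
    (hφ : ContDiff ℝ 2 φ) (hw : ContDiff ℝ 2 w)
    (p u : EuclideanSpace ℝ (Fin k)) :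
    iteratedFDeriv ℝ 2 (w ∘ φ) p ![u, u] =
      iteratedFDeriv ℝ 2 w (φ p) ![fderiv ℝ φ p u, fderiv ℝ φ p u]
        + fderiv ℝ w (φ p) (iteratedFDeriv ℝ 2 φ p ![u, u]) := by
  have hφ1 : Differentiable ℝ φ := hφ.differentiable two_ne_zero
  have hw1 : Differentiable ℝ w := hw.differentiable two_ne_zero
  have hw' : ContDiff ℝ 1 (fderiv ℝ w) := hw.fderiv_right (by norm_num)
  have hφ' : ContDiff ℝ 1 (fderiv ℝ φ) := hφ.fderiv_right (by norm_num)
  have hcomp : fderiv ℝ (w ∘ φ) = fun x => (fderiv ℝ w (φ x)).comp (fderiv ℝ φ x) :=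
    funext fun x => fderiv_comp x (hw1 _) (hφ1 x)
  have hc : DifferentiableAt ℝ (fun x => fderiv ℝ w (φ x)) p :=
    ((hw'.differentiable one_ne_zero (φ p)).comp p (hφ1 p) :
      DifferentiableAt ℝ ((fderiv ℝ w) ∘ φ) p)
  have hd : DifferentiableAt ℝ (fderiv ℝ φ) p := hφ'.differentiable one_ne_zero p
  have hcfd : fderiv ℝ (fun x => fderiv ℝ w (φ x)) p =
      (fderiv ℝ (fderiv ℝ w) (φ p)).comp (fderiv ℝ φ p) :=
    fderiv_comp p (hw'.differentiable one_ne_zero (φ p)) (hφ1 p)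
  rw [iteratedFDeriv_two_apply, iteratedFDeriv_two_apply, iteratedFDeriv_two_apply, hcomp,
    fderiv_clm_comp hc hd, hcfd]
  simp [ContinuousLinearMap.add_apply, add_comm]

/-- Let φ : M^k → ℝⁿ be a C² isometric immersion, expressed at a point p
in geodesic normal coordinates (coordinate frame ∂ᵢφ(p) orthonormal, Christoffel
symbols vanishing at p, so that Δ_M(w∘φ)(p) = Σᵢ ∂ᵢ²(w∘φ)(p) and the mean curvature
vector is H = Σᵢ ∂ᵢ²φ(p)). If |H| ≤ h and w ∈ C²(ℝⁿ) satisfies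
P_k^-(∇²w) − h|∇w| ≥ ξ∘w pointwise, then v = w∘φ satisfies Δ_M v ≥ ξ∘v at p. -/
theorem stmt17 (k n : ℕ) (hk1 : 1 ≤ k)
    (φ : EuclideanSpace ℝ (Fin k) → EuclideanSpace ℝ (Fin n))
    (w : EuclideanSpace ℝ (Fin n) → ℝ) (ξ : ℝ → ℝ) (h : ℝ) (hh : 0 ≤ h)
    (hφ : ContDiff ℝ 2 φ) (hw : ContDiff ℝ 2 w)
    (p : EuclideanSpace ℝ (Fin k))
    (horth : ∀ i j : Fin k,
      (inner ℝ (fderiv ℝ φ p (EuclideanSpace.single i 1))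
        (fderiv ℝ φ p (EuclideanSpace.single j 1)) : ℝ) =
        if i = j then 1 else 0)
    (hchristoffel : ∀ i j l : Fin k,
      (inner ℝ (iteratedFDeriv ℝ 2 φ p
          ![EuclideanSpace.single i 1, EuclideanSpace.single j 1])
        (fderiv ℝ φ p (EuclideanSpace.single l 1)) : ℝ) = 0)
    (hH : ‖∑ i : Fin k, iteratedFDeriv ℝ 2 φ p
        ![EuclideanSpace.single i 1, EuclideanSpace.single i 1]‖ ≤ h)
    (hsub : ∀ y : EuclideanSpace ℝ (Fin n),
      ξ (w y) ≤ PkHess n k w y - h * ‖gradient w y‖) :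
    ξ ((w ∘ φ) p) ≤ ∑ i : Fin k, iteratedFDeriv ℝ 2 (w ∘ φ) p
        ![EuclideanSpace.single i 1, EuclideanSpace.single i 1] := by
  classical
  set y := φ p with hy
  set e : Fin k → EuclideanSpace ℝ (Fin n) :=
    fun i => fderiv ℝ φ p (EuclideanSpace.single i 1) with he
  set H : EuclideanSpace ℝ (Fin n) := ∑ i : Fin k, iteratedFDeriv ℝ 2 φ p
      ![EuclideanSpace.single i 1, EuclideanSpace.single i 1] with hHdef
  -- sum decomposition
  have hsum : ∑ i : Fin k, iteratedFDeriv ℝ 2 (w ∘ φ) p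
        ![EuclideanSpace.single i 1, EuclideanSpace.single i 1]
      = (∑ i : Fin k, iteratedFDeriv ℝ 2 w y ![e i, e i]) + fderiv ℝ w y H := by
    rw [hHdef, map_sum, ← Finset.sum_add_distrib]
    exact Finset.sum_congr rfl fun i _ => second_deriv_comp k n φ w hφ hw p _
  -- orthonormality
  have honb : Orthonormal ℝ e := by
    rw [orthonormal_iff_ite]
    intro i j
    exact horth i j
  -- membership in the PkHess defining set
  have hmem : (∑ i : Fin k, iteratedFDeriv ℝ 2 w y ![e i, e i]) ∈
      {t : ℝ | ∃ e : Fin k → EuclideanSpace ℝ (Fin n), Orthonormal ℝ e ∧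
        t = ∑ i, iteratedFDeriv ℝ 2 w y ![e i, e i]} := ⟨e, honb, rfl⟩
  -- bounded below
  have hbdd : BddBelow {t : ℝ | ∃ e : Fin k → EuclideanSpace ℝ (Fin n), Orthonormal ℝ e ∧
      t = ∑ i, iteratedFDeriv ℝ 2 w y ![e i, e i]} := by
    refine ⟨-(k * ‖iteratedFDeriv ℝ 2 w y‖), ?_⟩
    rintro t ⟨f, hf, rfl⟩
    have : ∀ i : Fin k, -(‖iteratedFDeriv ℝ 2 w y‖) ≤ iteratedFDeriv ℝ 2 w y ![f i, f i] := by
      intro i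
      have h1 := (iteratedFDeriv ℝ 2 w y).le_opNorm ![f i, f i]
      have h2 : ∏ j : Fin 2, ‖(![f i, f i]) j‖ = 1 := by
        simp [Fin.prod_univ_two, hf.1 i]
      rw [h2, mul_one] at h1
      rw [Real.norm_eq_abs] at h1
      have := (abs_le.mp h1).1
      linarith
    calc -(↑k * ‖iteratedFDeriv ℝ 2 w y‖)
        = ∑ _i : Fin k, -(‖iteratedFDeriv ℝ 2 w y‖) := by
          simp [Finset.sum_const, nsmul_eq_mul]
      _ ≤ ∑ i : Fin k, iteratedFDeriv ℝ 2 w y ![f i, f i] :=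
          Finset.sum_le_sum fun i _ => this i
  have hPk : PkHess n k w y ≤ ∑ i : Fin k, iteratedFDeriv ℝ 2 w y ![e i, e i] :=
    csInf_le hbdd hmem
  -- gradient term
  have hgrad : fderiv ℝ w y H = (inner ℝ (gradient w y) H : ℝ) := by
    rw [gradient]
    exact (InnerProductSpace.toDual_symm_apply).symm
  have hinner : -(h * ‖gradient w y‖) ≤ fderiv ℝ w y H := by
    rw [hgrad]
    have h1 : |(inner ℝ (gradient w y) H : ℝ)| ≤ ‖gradient w y‖ * ‖H‖ :=
      abs_real_inner_le_norm _ _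
    have h2 : ‖gradient w y‖ * ‖H‖ ≤ ‖gradient w y‖ * h :=
      mul_le_mul_of_nonneg_left hH (norm_nonneg _)
    have := (abs_le.mp h1).1
    nlinarith
  have := hsub y
  have : ξ (w y) ≤ ∑ i : Fin k, iteratedFDeriv ℝ 2 w y ![e i, e i] + fderiv ℝ w y H := by
    linarith
  simpa [hsum] using this
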